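/- Let m and n be positive integers with n ≥ m and let a be a real number with a > n − m. Then Σ_{k=0}^{n−1} (−1)^k · Γ(m+k)·Γ(a+k) / (Γ(k+m+a−n) · (k!)² · Γ(n−k)) = (−1)^{n+1}. Equivalently, the terminating series ₃F₂(1−n, a, m; 1, a−n+m; 1) equals (−1)^{n+1}·Γ(a−n+m)·Γ(n) / (Γ(m)·Γ(a)). -/

import Mathlib

open scoped BigOperators
open Finset
open Polynomial

/-- Pochhammer (ascending factorial) `(x)_k = x (x+1) ⋯ (x+k-1)`. -/
noncomputable def poch (x : ℝ) (k : ℕ) : ℝ := Polynomial.eval x (ascPochhammer ℝ k)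

lemma alt_choose_real (M : ℕ) :
    ∑ i ∈ range (M + 1), (-1 : ℝ) ^ i * (M.choose i : ℝ) = if M = 0 then 1 else 0 := by
  have h : ∑ i ∈ range (M + 1), (-1 : ℝ) ^ i * (M.choose i : ℝ)
      = ((∑ i ∈ range (M + 1), (-1 : ℤ) ^ i * (M.choose i) : ℤ) : ℝ) := by
    push_cast; rfl
  rw [h, Int.alternating_sum_range_choose]
  split <;> simp

lemma alt_desc (N j : ℕ) (hj : j ≤ N) :
    ∑ k ∈ range (N + 1), (-1 : ℝ) ^ k * (N.choose k : ℝ) * (descPochhammer ℝ j).eval (k : ℝ) =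
      if j = N then (-1 : ℝ) ^ N * (N.factorial : ℝ) else 0 := by
  have hstep : ∀ k : ℕ, (-1 : ℝ) ^ k * (N.choose k : ℝ) * (descPochhammer ℝ j).eval (k : ℝ)
      = (-1 : ℝ) ^ k * ((N.choose k * (j.factorial * k.choose j) : ℕ) : ℝ) := by
    intro k
    rw [descPochhammer_eval_eq_descFactorial, Nat.descFactorial_eq_factorial_mul_choose]
    push_cast; ring
  calc ∑ k ∈ range (N + 1), (-1 : ℝ) ^ k * (N.choose k : ℝ) * (descPochhammer ℝ j).eval (k : ℝ)
      = ∑ k ∈ Ico j (N + 1), (-1 : ℝ) ^ k * ((N.choose k * (j.factorial * k.choose j) : ℕ) : ℝ) := by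
        rw [Finset.sum_congr rfl (fun k _ => hstep k), Finset.range_eq_Ico]
        refine (Finset.sum_subset (Finset.Ico_subset_Ico (Nat.zero_le j) le_rfl) ?_).symm
        intro x hx hnx
        have hxj : x < j := by
          simp only [Finset.mem_Ico] at hx hnx
          omega
        rw [Nat.choose_eq_zero_of_lt hxj]
        simp
    _ = ∑ i ∈ range (N + 1 - j), (-1 : ℝ) ^ (j + i) *
          ((N.choose (j + i) * (j.factorial * (j + i).choose j) : ℕ) : ℝ) := by
        rw [Finset.sum_Ico_eq_sum_range]
    _ = (-1 : ℝ) ^ j * (N.choose j : ℝ) * (j.factorial : ℝ) *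
          ∑ i ∈ range (N - j + 1), (-1 : ℝ) ^ i * ((N - j).choose i : ℝ) := by
        have hr : N + 1 - j = N - j + 1 := by omega
        rw [hr, Finset.mul_sum]
        refine Finset.sum_congr rfl (fun i hi => ?_)
        have hiN : j + i ≤ N := by
          simp only [Finset.mem_range] at hi; omega
        have hc : (N.choose (j + i) : ℝ) * ((j + i).choose j : ℝ)
            = (N.choose j : ℝ) * ((N - j).choose i : ℝ) := by
          have h2 : N.choose (j + i) * (j + i).choose j = N.choose j * (N - j).choose (j + i - j) :=
            Nat.choose_mul (Nat.le_add_right j i)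
          have h3 : j + i - j = i := by omega
          rw [h3] at h2
          exact_mod_cast h2
        push_cast [pow_add]
        linear_combination ((-1 : ℝ) ^ j * (-1) ^ i * (j.factorial : ℝ)) * hc
    _ = if j = N then (-1 : ℝ) ^ N * (N.factorial : ℝ) else 0 := by
        rw [alt_choose_real]
        by_cases h : j = N
        · subst h
          simp [Nat.choose_self]
        · have : N - j ≠ 0 := by omega
          simp [this, h]

lemma alt_poly_aux (N : ℕ) : ∀ d : ℕ, ∀ P : ℝ[X], P.natDegree ≤ d → P.natDegree ≤ N →
    ∑ k ∈ range (N + 1), (-1 : ℝ) ^ k * (N.choose k : ℝ) * P.eval (k : ℝ) =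
      (-1 : ℝ) ^ N * (N.factorial : ℝ) * P.coeff N := by
  intro d
  induction d with
  | zero =>
    intro P hd hN
    have hP : P = Polynomial.C (P.coeff 0) := Polynomial.eq_C_of_natDegree_le_zero hd
    rw [hP]
    simp only [Polynomial.eval_C, Polynomial.coeff_C]
    rw [← Finset.sum_mul, alt_choose_real]
    by_cases h : N = 0 <;> simp [h]
  | succ d ih =>
    intro P hd hN
    by_cases h : P.natDegree ≤ d
    · exact ih P h hN
    · have hdeg : P.natDegree = d + 1 := by omega
      have hP0 : P ≠ 0 := fun h0 => by simp [h0] at hdeg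
      set c := P.leadingCoeff with hc
      have hc0 : c ≠ 0 := Polynomial.leadingCoeff_ne_zero.mpr hP0
      set D := descPochhammer ℝ (d + 1) with hD
      have hDm : D.Monic := monic_descPochhammer ℝ (d + 1)
      have hDdeg : D.natDegree = d + 1 := descPochhammer_natDegree (R := ℝ) (d + 1)
      set Q := P - Polynomial.C c * D with hQ
      have hdq : (Polynomial.C c * D).degree = P.degree := by
        rw [Polynomial.degree_C_mul hc0, Polynomial.degree_eq_natDegree hP0,
          Polynomial.degree_eq_natDegree hDm.ne_zero, hDdeg, hdeg]
      have hlcq : (Polynomial.C c * D).leadingCoeff = P.leadingCoeff := by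
        rw [Polynomial.leadingCoeff_mul, Polynomial.leadingCoeff_C, hDm.leadingCoeff, mul_one]
      have hQdeg : Q.degree < P.degree := by
        rw [hQ]
        exact Polynomial.degree_sub_lt hdq.symm hP0 hlcq.symm
      have hQnd : Q.natDegree ≤ d := by
        by_cases hQ0 : Q = 0
        · simp [hQ0]
        · have := Polynomial.natDegree_lt_natDegree hQ0 hQdeg
          omega
      have hPQ : P = Q + Polynomial.C c * D := by rw [hQ]; ring
      have hsum := ih Q hQnd (le_trans hQnd (by omega))
      have hdesc := alt_desc N (d + 1) (by omega)
      rw [hPQ]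
      simp only [Polynomial.eval_add, Polynomial.eval_mul, Polynomial.eval_C,
        Polynomial.coeff_add, Polynomial.coeff_C_mul]
      have hsplit : ∑ k ∈ range (N + 1), (-1 : ℝ) ^ k * (N.choose k : ℝ) *
            (Q.eval (k : ℝ) + c * D.eval (k : ℝ))
          = (∑ k ∈ range (N + 1), (-1 : ℝ) ^ k * (N.choose k : ℝ) * Q.eval (k : ℝ))
            + c * ∑ k ∈ range (N + 1), (-1 : ℝ) ^ k * (N.choose k : ℝ) * D.eval (k : ℝ) := by
        rw [Finset.mul_sum, ← Finset.sum_add_distrib]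
        exact Finset.sum_congr rfl (fun k _ => by ring)
      rw [hsplit, hsum, hdesc]
      have hDcN : D.coeff N = if d + 1 = N then 1 else 0 := by
        by_cases hdn : d + 1 = N
        · rw [if_pos hdn, ← hdn, ← hDdeg]
          exact hDm.coeff_natDegree
        · rw [if_neg hdn]
          have : D.natDegree < N := by omega
          exact Polynomial.coeff_eq_zero_of_natDegree_lt this
      rw [hDcN]
      by_cases hdn : d + 1 = N <;> simp [hdn] <;> ring

lemma alt_poly (N : ℕ) (P : ℝ[X]) (hN : P.natDegree ≤ N) :
    ∑ k ∈ range (N + 1), (-1 : ℝ) ^ k * (N.choose k : ℝ) * P.eval (k : ℝ) =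
      (-1 : ℝ) ^ N * (N.factorial : ℝ) * P.coeff N :=
  alt_poly_aux N N P hN hN

lemma poch_zero (x : ℝ) : poch x 0 = 1 := by simp [poch]

lemma poch_succ (x : ℝ) (k : ℕ) : poch x (k + 1) = poch x k * (x + k) := by
  simp [poch, ascPochhammer_succ_right, Polynomial.eval_mul]

lemma poch_one (k : ℕ) : poch 1 k = (k.factorial : ℝ) := by
  simpa [poch] using ascPochhammer_eval_one ℝ k

lemma gamma_poch (x : ℝ) (hx : 0 < x) (k : ℕ) :
    Real.Gamma (x + k) = poch x k * Real.Gamma x := by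
  induction k with
  | zero => simp [poch_zero]
  | succ k ih =>
    have hxk : x + (k : ℝ) ≠ 0 := by positivity
    have h1 : x + ((k : ℕ) + 1 : ℕ) = (x + k) + 1 := by push_cast; ring
    rw [h1, Real.Gamma_add_one hxk, ih, poch_succ]
    ring

lemma poch_prod (x : ℝ) (k : ℕ) : poch x k = ∏ j ∈ range k, (x + j) := by
  induction k with
  | zero => simp [poch_zero]
  | succ k ih => rw [poch_succ, ih, prod_range_succ]

lemma poch_ne_zero_of_pos {x : ℝ} (hx : 0 < x) (k : ℕ) : poch x k ≠ 0 := by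
  rw [poch_prod]
  exact Finset.prod_ne_zero_iff.mpr (fun j _ => by positivity)

lemma fact_prod (p k : ℕ) :
    ((p + k).factorial : ℝ) = (k.factorial : ℝ) * ∏ j ∈ range p, ((k : ℝ) + j + 1) := by
  induction p with
  | zero => simp
  | succ p ih =>
    have h1 : p + 1 + k = (p + k) + 1 := by omega
    rw [h1, Nat.factorial_succ, prod_range_succ, ← mul_assoc]
    push_cast [ih]
    ring

lemma poch_neg (N : ℕ) : ∀ k : ℕ, k ≤ N →
    poch (1 - ((N : ℝ) + 1)) k * ((N - k).factorial : ℝ) = (-1 : ℝ) ^ k * (N.factorial : ℝ) := by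
  intro k
  induction k with
  | zero => simp [poch_zero]
  | succ k ih =>
    intro hk
    have hk' : k ≤ N := by omega
    have hkN : k < N := by omega
    rw [poch_succ]
    have h1 : 1 - ((N : ℝ) + 1) + (k : ℝ) = -(((N - k : ℕ) : ℝ)) := by
      rw [Nat.cast_sub hk']
      ring
    have h2 : (N - k).factorial = (N - k) * (N - (k + 1)).factorial := by
      have h3 : N - k = (N - (k + 1)) + 1 := by omega
      rw [h3, Nat.factorial_succ]
    calc poch (1 - ((N : ℝ) + 1)) k * (1 - ((N : ℝ) + 1) + (k : ℝ)) * ((N - (k + 1)).factorial : ℝ)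
        = -(poch (1 - ((N : ℝ) + 1)) k * (((N - k : ℕ) : ℝ) * ((N - (k + 1)).factorial : ℝ))) := by
          rw [h1]; ring
      _ = -(poch (1 - ((N : ℝ) + 1)) k * ((N - k).factorial : ℝ)) := by
          rw [h2]; push_cast; ring
      _ = (-1 : ℝ) ^ (k + 1) * (N.factorial : ℝ) := by
          rw [ih hk']; ring

/-- A zero-balanced terminating variant of the Saalschütz theorem. -/
theorem saalschutz_zero_balanced (m n : ℕ) (hm : 0 < m) (hn : 0 < n) (hmn : m ≤ n)
    (a : ℝ) (ha : a > (n : ℝ) - (m : ℝ)) :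
    (∑ k ∈ range n,
        (-1 : ℝ) ^ k * Real.Gamma ((m : ℝ) + (k : ℝ)) * Real.Gamma (a + (k : ℝ)) /
          (Real.Gamma ((k : ℝ) + (m : ℝ) + a - (n : ℝ)) * ((k.factorial : ℝ)) ^ 2 *
            Real.Gamma ((n : ℝ) - (k : ℝ))) =
      (-1 : ℝ) ^ (n + 1)) ∧
    (∑ k ∈ range n,
        poch (1 - (n : ℝ)) k * poch a k * poch (m : ℝ) k /
          (poch 1 k * poch (a - (n : ℝ) + (m : ℝ)) k * (k.factorial : ℝ)) =
      (-1 : ℝ) ^ (n + 1) * Real.Gamma (a - (n : ℝ) + (m : ℝ)) * Real.Gamma (n : ℝ) /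
        (Real.Gamma (m : ℝ) * Real.Gamma a)) := by
  obtain ⟨N, rfl⟩ : ∃ N, n = N + 1 := ⟨n - 1, by omega⟩
  obtain ⟨p, rfl⟩ : ∃ p, m = p + 1 := ⟨m - 1, by omega⟩
  have hpN : p ≤ N := by omega
  have hNp : ((N - p : ℕ) : ℝ) = (N : ℝ) - (p : ℝ) := by
    rw [Nat.cast_sub hpN]
  set b : ℝ := a - (N : ℝ) + (p : ℝ) with hbdef
  have ha' : a > (N : ℝ) - (p : ℝ) := by
    have : ((N + 1 : ℕ) : ℝ) - ((p + 1 : ℕ) : ℝ) = (N : ℝ) - (p : ℝ) := by push_cast; ring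
    rw [this] at ha
    exact ha
  have hb : 0 < b := by rw [hbdef]; linarith
  have ha0 : 0 < a := by
    have hNp' : (0 : ℝ) ≤ (N : ℝ) - (p : ℝ) := by
      rw [← hNp]; positivity
    linarith
  have hGa0 := Real.Gamma_pos_of_pos ha0
  have hGb0 := Real.Gamma_pos_of_pos hb
  -- the polynomial
  set P : ℝ[X] := (∏ j ∈ range p, (X + Polynomial.C ((j : ℝ) + 1))) *
      ∏ j ∈ range (N - p), (X + Polynomial.C (b + j)) with hPdef
  have hm1 : (∏ j ∈ range p, (X + Polynomial.C ((j : ℝ) + 1))).Monic :=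
    monic_prod_of_monic _ _ (fun j _ => monic_X_add_C _)
  have hm2 : (∏ j ∈ range (N - p), (X + Polynomial.C (b + j))).Monic :=
    monic_prod_of_monic _ _ (fun j _ => monic_X_add_C _)
  have hPm : P.Monic := hm1.mul hm2
  have hd1 : (∏ j ∈ range p, (X + Polynomial.C ((j : ℝ) + 1))).natDegree = p := by
    rw [Polynomial.natDegree_prod_of_monic _ _ (fun j _ => monic_X_add_C _)]
    simp only [Polynomial.natDegree_X_add_C, Finset.sum_const, Finset.card_range, smul_eq_mul,
      mul_one]
  have hd2 : (∏ j ∈ range (N - p), (X + Polynomial.C (b + j))).natDegree = N - p := by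
    rw [Polynomial.natDegree_prod_of_monic _ _ (fun j _ => monic_X_add_C _)]
    simp only [Polynomial.natDegree_X_add_C, Finset.sum_const, Finset.card_range, smul_eq_mul,
      mul_one]
  have hPd : P.natDegree = N := by
    rw [hPdef, hm1.natDegree_mul hm2, hd1, hd2]
    omega
  have hcoeff : P.coeff N = 1 := by rw [← hPd]; exact hPm.coeff_natDegree
  have hPeval : ∀ k : ℕ, P.eval (k : ℝ) =
      (∏ j ∈ range p, ((k : ℝ) + j + 1)) * ∏ j ∈ range (N - p), ((k : ℝ) + b + j) := by
    intro k
    rw [hPdef]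
    simp only [Polynomial.eval_mul, Polynomial.eval_prod, Polynomial.eval_add,
      Polynomial.eval_X, Polynomial.eval_C]
    congr 1 <;> exact Finset.prod_congr rfl (fun j _ => by ring)
  -- Gamma rewrites
  have hGm : ∀ k : ℕ, Real.Gamma (((p + 1 : ℕ) : ℝ) + (k : ℝ)) = ((p + k).factorial : ℝ) := by
    intro k
    have h1 : ((p + 1 : ℕ) : ℝ) + (k : ℝ) = ((p + k : ℕ) : ℝ) + 1 := by push_cast; ring
    rw [h1, Real.Gamma_nat_eq_factorial]
  have hGn : ∀ k : ℕ, k ≤ N →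
      Real.Gamma (((N + 1 : ℕ) : ℝ) - (k : ℝ)) = ((N - k).factorial : ℝ) := by
    intro k hk
    have h1 : ((N + 1 : ℕ) : ℝ) - (k : ℝ) = ((N - k : ℕ) : ℝ) + 1 := by
      rw [Nat.cast_sub hk]; push_cast; ring
    rw [h1, Real.Gamma_nat_eq_factorial]
  have hGbk : ∀ k : ℕ, 0 < b + (k : ℝ) := fun k => by positivity
  have hGa : ∀ k : ℕ, Real.Gamma (a + (k : ℝ)) =
      (∏ j ∈ range (N - p), ((k : ℝ) + b + j)) * Real.Gamma (b + (k : ℝ)) := by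
    intro k
    have h1 : a + (k : ℝ) = (b + (k : ℝ)) + ((N - p : ℕ) : ℝ) := by
      rw [hNp, hbdef]; ring
    rw [h1, gamma_poch (b + (k : ℝ)) (hGbk k) (N - p), poch_prod]
    congr 1
    exact Finset.prod_congr rfl (fun j _ => by ring)
  have hGarg : ∀ k : ℕ, (k : ℝ) + ((p + 1 : ℕ) : ℝ) + a - ((N + 1 : ℕ) : ℝ) = b + (k : ℝ) := by
    intro k; rw [hbdef]; push_cast; ring
  -- part 1
  have part1 : ∑ k ∈ range (N + 1),
      (-1 : ℝ) ^ k * Real.Gamma (((p + 1 : ℕ) : ℝ) + (k : ℝ)) * Real.Gamma (a + (k : ℝ)) /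
        (Real.Gamma ((k : ℝ) + ((p + 1 : ℕ) : ℝ) + a - ((N + 1 : ℕ) : ℝ)) *
          ((k.factorial : ℝ)) ^ 2 * Real.Gamma (((N + 1 : ℕ) : ℝ) - (k : ℝ))) =
      (-1 : ℝ) ^ (N + 1 + 1) := by
    have hrw : ∀ k ∈ range (N + 1),
        (-1 : ℝ) ^ k * Real.Gamma (((p + 1 : ℕ) : ℝ) + (k : ℝ)) * Real.Gamma (a + (k : ℝ)) /
          (Real.Gamma ((k : ℝ) + ((p + 1 : ℕ) : ℝ) + a - ((N + 1 : ℕ) : ℝ)) *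
            ((k.factorial : ℝ)) ^ 2 * Real.Gamma (((N + 1 : ℕ) : ℝ) - (k : ℝ))) =
        (-1 : ℝ) ^ k * (N.choose k : ℝ) * P.eval (k : ℝ) / (N.factorial : ℝ) := by
      intro k hk
      rw [Finset.mem_range] at hk
      have hk' : k ≤ N := by omega
      rw [hGm k, hGn k hk', hGa k, hGarg k, hPeval k, fact_prod p k]
      have hcf : ((N.choose k : ℝ)) * (k.factorial : ℝ) * ((N - k).factorial : ℝ)
          = (N.factorial : ℝ) := by
        exact_mod_cast Nat.choose_mul_factorial_mul_factorial hk'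
      have hGbk' : Real.Gamma (b + (k : ℝ)) ≠ 0 := (Real.Gamma_pos_of_pos (hGbk k)).ne'
      have hf1 : (k.factorial : ℝ) ≠ 0 := Nat.cast_ne_zero.mpr k.factorial_ne_zero
      have hf2 : ((N - k).factorial : ℝ) ≠ 0 := Nat.cast_ne_zero.mpr (N - k).factorial_ne_zero
      have hf3 : (N.factorial : ℝ) ≠ 0 := Nat.cast_ne_zero.mpr N.factorial_ne_zero
      field_simp
      linear_combination (-1 : ℝ) * hcf
    rw [Finset.sum_congr rfl hrw, ← Finset.sum_div, alt_poly N P hPd.le, hcoeff]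
    have hf3 : (N.factorial : ℝ) ≠ 0 := Nat.cast_ne_zero.mpr N.factorial_ne_zero
    have hpow : (-1 : ℝ) ^ (N + 1 + 1) = (-1 : ℝ) ^ N := by
      rw [pow_succ, pow_succ]; ring
    rw [hpow, mul_one, mul_div_assoc, div_self hf3, mul_one]
  refine ⟨part1, ?_⟩
  -- part 2
  have hb' : a - ((N + 1 : ℕ) : ℝ) + ((p + 1 : ℕ) : ℝ) = b := by rw [hbdef]; push_cast; ring
  have hone : (1 : ℝ) - ((N + 1 : ℕ) : ℝ) = 1 - ((N : ℝ) + 1) := by push_cast; ring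
  have hGnn : Real.Gamma (((N + 1 : ℕ) : ℝ)) = (N.factorial : ℝ) := by
    have : ((N + 1 : ℕ) : ℝ) = (N : ℝ) + 1 := by push_cast; ring
    rw [this, Real.Gamma_nat_eq_factorial]
  have hGmm : Real.Gamma (((p + 1 : ℕ) : ℝ)) = (p.factorial : ℝ) := by
    have : ((p + 1 : ℕ) : ℝ) = (p : ℝ) + 1 := by push_cast; ring
    rw [this, Real.Gamma_nat_eq_factorial]
  rw [hb', hone, hGnn, hGmm]
  have hrw2 : ∀ k ∈ range (N + 1),
      poch (1 - ((N : ℝ) + 1)) k * poch a k * poch (((p + 1 : ℕ) : ℝ)) k /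
        (poch 1 k * poch b k * (k.factorial : ℝ)) =
      (Real.Gamma b * (N.factorial : ℝ) / ((p.factorial : ℝ) * Real.Gamma a)) *
        ((-1 : ℝ) ^ k * Real.Gamma (((p + 1 : ℕ) : ℝ) + (k : ℝ)) * Real.Gamma (a + (k : ℝ)) /
          (Real.Gamma ((k : ℝ) + ((p + 1 : ℕ) : ℝ) + a - ((N + 1 : ℕ) : ℝ)) *
            ((k.factorial : ℝ)) ^ 2 * Real.Gamma (((N + 1 : ℕ) : ℝ) - (k : ℝ)))) := by
    intro k hk
    rw [Finset.mem_range] at hk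
    have hk' : k ≤ N := by omega
    have hp1 : (0 : ℝ) < ((p + 1 : ℕ) : ℝ) := by positivity
    have e1 : poch a k = Real.Gamma (a + (k : ℝ)) / Real.Gamma a := by
      rw [gamma_poch a ha0 k]
      field_simp
    have e2 : poch (((p + 1 : ℕ) : ℝ)) k = ((p + k).factorial : ℝ) / (p.factorial : ℝ) := by
      have h := gamma_poch (((p + 1 : ℕ) : ℝ)) hp1 k
      rw [hGm k, hGmm] at h
      have hf : (p.factorial : ℝ) ≠ 0 := Nat.cast_ne_zero.mpr p.factorial_ne_zero
      rw [eq_div_iff hf]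
      linarith [h]
    have e3 : poch b k = Real.Gamma (b + (k : ℝ)) / Real.Gamma b := by
      rw [gamma_poch b hb k]
      field_simp
    have e4 : poch (1 - ((N : ℝ) + 1)) k =
        (-1 : ℝ) ^ k * (N.factorial : ℝ) / ((N - k).factorial : ℝ) := by
      have hf : ((N - k).factorial : ℝ) ≠ 0 := Nat.cast_ne_zero.mpr (N - k).factorial_ne_zero
      rw [eq_div_iff hf]
      exact poch_neg N k hk'
    rw [e1, e2, e3, e4, poch_one, hGm k, hGn k hk', hGarg k]
    have hGbk' : Real.Gamma (b + (k : ℝ)) ≠ 0 := (Real.Gamma_pos_of_pos (hGbk k)).ne'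
    have hf1 : (k.factorial : ℝ) ≠ 0 := Nat.cast_ne_zero.mpr k.factorial_ne_zero
    have hf2 : ((N - k).factorial : ℝ) ≠ 0 := Nat.cast_ne_zero.mpr (N - k).factorial_ne_zero
    have hf4 : (p.factorial : ℝ) ≠ 0 := Nat.cast_ne_zero.mpr p.factorial_ne_zero
    field_simp
  rw [Finset.sum_congr rfl hrw2, ← Finset.mul_sum, part1]
  ring
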